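/- For every n ≥ 2, the maximum number of edges in a graph on n vertices containing no Hamiltonian path equals C(n−1, 2). -/

import Mathlib

open Finset

variable {V : Type*} [Fintype V] [DecidableEq V]
set_option linter.unusedSectionVars false

/-- chain' is symmetric-reversible for symmetric relations -/
lemma chain'_reverse_of_symm {R : V → V → Prop} (hR : Symmetric R) {l : List V}
    (h : l.Chain' R) : l.reverse.Chain' R := by
  unfold List.Chain' at h ⊢; rw [List.isChain_reverse]
  exact h.imp (fun a b hab => hR hab)

/-- build a walk from a chain' list -/
lemma exists_walk_of_chain (G : SimpleGraph V) :
    ∀ (l : List V), l.Chain' G.Adj → l ≠ [] → ∃ (a b : V) (p : G.Walk a b), p.support = l := by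
  intro l
  induction l with
  | nil => intro _ h; exact absurd rfl h
  | cons x t ih =>
    intro hc _
    match t, hc with
    | [], _ => exact ⟨x, x, SimpleGraph.Walk.nil, rfl⟩
    | y :: t', hc =>
      obtain ⟨hxy, hc'⟩ := List.isChain_cons_cons.mp hc
      obtain ⟨a, b, p, hp⟩ := ih hc' (by simp)
      have ha : a = y := by
        have := p.support_eq_cons
        rw [hp] at this
        exact (List.cons.injEq _ _ _ _ ▸ this.symm).1
      subst ha
      exact ⟨x, b, SimpleGraph.Walk.cons hxy p, by simp [hp]⟩

lemma two_mul_choose_two (m : ℕ) : 2 * m.choose 2 = m * (m - 1) := by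
  induction m with
  | zero => rfl
  | succ k ih =>
    rw [Nat.choose_succ_succ, Nat.mul_add, ih, Nat.succ_sub_one]
    cases k with
    | zero => rfl
    | succ j => rw [Nat.choose_one_right]; simp [Nat.succ_sub_one]; ring

/-- The complete graph on a finset of vertices. -/
def KOn (s : Finset V) : SimpleGraph V where
  Adj x y := x ≠ y ∧ x ∈ s ∧ y ∈ s
  symm := by constructor; intro x y ⟨h1, h2, h3⟩; exact ⟨h1.symm, h3, h2⟩
  loopless := by constructor; intro x ⟨h1, _⟩; exact h1 rfl

instance (s : Finset V) : DecidableRel (KOn s).Adj := by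
  intro x y; unfold KOn; simp only; infer_instance

lemma KOn_degree (s : Finset V) (x : V) (hx : x ∈ s) : (KOn s).degree x = s.card - 1 := by
  rw [← SimpleGraph.card_neighborFinset_eq_degree]
  have : (KOn s).neighborFinset x = s.erase x := by
    ext y
    rw [SimpleGraph.mem_neighborFinset]
    simp [SimpleGraph.mem_neighborFinset, KOn, Finset.mem_erase, hx]
    tauto
  rw [this, Finset.card_erase_of_mem hx]

lemma KOn_degree_notMem (s : Finset V) (x : V) (hx : x ∉ s) : (KOn s).degree x = 0 := by
  rw [← SimpleGraph.card_neighborFinset_eq_degree]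
  convert Finset.card_empty
  ext y
  rw [SimpleGraph.mem_neighborFinset]
  simp [SimpleGraph.mem_neighborFinset, KOn]
  tauto

lemma KOn_card_edges (s : Finset V) : (KOn s).edgeFinset.card = s.card.choose 2 := by
  have h := SimpleGraph.sum_degrees_eq_twice_card_edges (KOn s)
  have hsum : ∑ v, (KOn s).degree v = s.card * (s.card - 1) := by
    rw [← Finset.sum_subset (Finset.subset_univ s)]
    · rw [Finset.sum_congr rfl (fun x hx => KOn_degree s x hx)]
      simp [Finset.sum_const, Nat.mul_comm]
    · intro x _ hx; exact KOn_degree_notMem s x hx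
  rw [hsum, ← two_mul_choose_two] at h
  omega

section Ore
variable (G : SimpleGraph V) [DecidableRel G.Adj]

lemma mem_of_adj_head {l : List V} (hchain : l.Chain' G.Adj) (hnodup : l.Nodup)
    (hmax : ∀ l' : List V, l'.Chain' G.Adj → l'.Nodup → l'.length ≤ l.length)
    (hne : l ≠ []) {y : V} (hadj : G.Adj y (l.head hne)) : y ∈ l := by
  by_contra hy
  have hc : (y :: l).Chain' G.Adj := by
    unfold List.Chain'; rw [List.isChain_cons]
    refine ⟨fun z hz => ?_, hchain⟩
    rw [List.head?_eq_head hne, Option.mem_some_iff] at hz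
    exact hz ▸ hadj
  have := hmax (y :: l) hc (List.nodup_cons.mpr ⟨hy, hnodup⟩)
  simp only [List.length_cons] at this
  omega

lemma mem_of_adj_getLast {l : List V} (hchain : l.Chain' G.Adj) (hnodup : l.Nodup)
    (hmax : ∀ l' : List V, l'.Chain' G.Adj → l'.Nodup → l'.length ≤ l.length)
    (hne : l ≠ []) {y : V} (hadj : G.Adj y (l.getLast hne)) : y ∈ l := by
  have hne' : l.reverse ≠ [] := by simpa using hne
  have h := mem_of_adj_head G (chain'_reverse_of_symm (fun _ _ h => G.adj_symm h) hchain)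
    (List.nodup_reverse.mpr hnodup)
    (fun l' h1 h2 => by simpa using hmax l' h1 h2) hne' (y := y) ?_
  · simpa using h
  · rwa [List.head_reverse]

lemma chain'_rotate_of_cycle {R : V → V → Prop} {c : List V} (hchain : c.Chain' R)
    (hne : c ≠ []) (hcyc : R (c.getLast hne) (c.head hne)) (m : ℕ) (hm : m ≤ c.length) :
    (c.rotate m).Chain' R := by
  rw [List.rotate_eq_drop_append_take hm]
  refine List.isChain_append.mpr ⟨hchain.drop m, hchain.take m, ?_⟩
  intro x hx y hy
  rcases eq_or_lt_of_le hm with rfl | hlt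
  · simp at hx
  · rcases Nat.eq_zero_or_pos m with rfl | hmpos
    · simp at hy
    · have hdne : c.drop m ≠ [] := by
        apply List.ne_nil_of_length_pos; simp; omega
      have htne : c.take m ≠ [] := by
        apply List.ne_nil_of_length_pos; simp
        exact ⟨hmpos, List.length_pos_iff.mpr hne⟩
      rw [List.getLast?_eq_getLast hdne, Option.mem_some_iff] at hx
      rw [List.head?_eq_head htne, Option.mem_some_iff] at hy
      subst hx hy
      rw [List.getLast_drop, List.head_take]
      exact hcyc
end Ore

lemma ore_hamiltonian_list (G : SimpleGraph V) [DecidableRel G.Adj]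
    (hcard : 1 ≤ Fintype.card V)
    (hore : ∀ u v : V, u ≠ v → ¬G.Adj u v →
      Fintype.card V ≤ G.degree u + G.degree v + 1) :
    ∃ l : List V, l.Chain' G.Adj ∧ l.Nodup ∧ ∀ v : V, v ∈ l := by
  classical
  set N := Fintype.card V with hN
  let P : ℕ → Prop := fun k => ∃ l : List V, l.Chain' G.Adj ∧ l.Nodup ∧ l.length = k
  have hP1 : P 1 := by
    obtain ⟨v⟩ := Fintype.card_pos_iff.mp hcard
    exact ⟨[v], List.isChain_singleton v, List.nodup_singleton v, rfl⟩
  set k := Nat.findGreatest P N with hkdef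
  have hPk : P k := Nat.findGreatest_spec hcard hP1
  have hk1 : 1 ≤ k := Nat.le_findGreatest hcard hP1
  obtain ⟨l, hchain, hnodup, hlen⟩ := hPk
  have hmax : ∀ l' : List V, l'.Chain' G.Adj → l'.Nodup → l'.length ≤ l.length := by
    intro l' h1 h2
    rw [hlen]
    exact Nat.le_findGreatest (h2.length_le_card) ⟨l', h1, h2, rfl⟩
  refine ⟨l, hchain, hnodup, ?_⟩
  by_contra hfull
  push_neg at hfull
  obtain ⟨v0, hv0⟩ := hfull
  have hne : l ≠ [] := by
    apply List.ne_nil_of_length_pos; omega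
  have hkN : k < N := by
    have h1 : l.toFinset ⊆ Finset.univ.erase v0 := by
      intro x hx
      rw [Finset.mem_erase]
      exact ⟨fun h => hv0 (h ▸ List.mem_toFinset.mp hx), Finset.mem_univ x⟩
    have h2 := Finset.card_le_card h1
    rw [List.toFinset_card_of_nodup hnodup, hlen] at h2
    rw [Finset.card_erase_of_mem (Finset.mem_univ v0), Finset.card_univ, ← hN] at h2
    omega
  set a := l.head hne with ha
  set b := l.getLast hne with hb
  -- degree bound for head
  have hdeg_head : G.degree a ≤ k - 1 := by
    rw [← SimpleGraph.card_neighborFinset_eq_degree]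
    have hsub : G.neighborFinset a ⊆ l.toFinset.erase a := by
      intro y hy
      rw [SimpleGraph.mem_neighborFinset] at hy
      rw [Finset.mem_erase, List.mem_toFinset]
      exact ⟨(G.ne_of_adj hy).symm, mem_of_adj_head G hchain hnodup hmax hne (G.adj_symm hy)⟩
    have := Finset.card_le_card hsub
    rwa [Finset.card_erase_of_mem (List.mem_toFinset.mpr (List.head_mem hne)),
      List.toFinset_card_of_nodup hnodup, hlen] at this
  -- there is a vertex outside l adjacent to something in l
  have hout : ∃ x ∈ l, G.Adj v0 x := by
    by_contra h
    push_neg at h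
    have hsub : G.neighborFinset v0 ⊆ Finset.univ \ insert v0 l.toFinset := by
      intro y hy
      rw [SimpleGraph.mem_neighborFinset] at hy
      rw [Finset.mem_sdiff, Finset.mem_insert]
      refine ⟨Finset.mem_univ y, fun hc => ?_⟩
      rcases hc with rfl | hc
      · exact G.irrefl hy
      · exact h y (List.mem_toFinset.mp hc) hy
    have hd0 : G.degree v0 ≤ N - (k + 1) := by
      rw [← SimpleGraph.card_neighborFinset_eq_degree]
      have := Finset.card_le_card hsub
      rwa [Finset.card_sdiff_of_subset (Finset.subset_univ _), Finset.card_univ,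
        Finset.card_insert_of_notMem (fun hc => hv0 (List.mem_toFinset.mp hc)),
        List.toFinset_card_of_nodup hnodup, hlen, ← hN] at this
    have hneq : v0 ≠ a := fun hc => hv0 (hc ▸ List.head_mem hne)
    have hnadj : ¬G.Adj v0 a := h a (List.head_mem hne)
    have := hore v0 a hneq hnadj
    omega
  obtain ⟨x0, hx0l, hx0adj⟩ := hout
  -- produce a "cycle" list: same elements as l, chain, last adjacent to head
  have hk2 : 2 ≤ k := by
    by_contra h
    have hk : l.length = 1 := by omega
    obtain ⟨z, hz⟩ := List.length_eq_one_iff.mp hk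
    have hx0a : x0 = a := by
      rw [ha]; subst hz; simpa using hx0l
    rw [ha] at hx0a
    exact hv0 (mem_of_adj_head G hchain hnodup hmax hne (hx0a ▸ hx0adj))
  have hab : a ≠ b := by
    intro h
    rw [ha, hb, List.head_eq_getElem, List.getLast_eq_getElem] at h
    have := (hnodup.getElem_inj_iff).mp h
    omega
  have hcyc : ∃ c : List V, c.Chain' G.Adj ∧ c.Perm l ∧
      ∃ hc : c ≠ [], G.Adj (c.getLast hc) (c.head hc) := by
    by_cases hadj : G.Adj b a
    · exact ⟨l, hchain, List.Perm.refl l, hne, hadj⟩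
    · have hnadj : ¬G.Adj a b := fun h => hadj (G.adj_symm h)
      have hdegsum := hore a b hab hnadj
      set S := (Finset.range (k - 1)).filter (fun i => G.Adj a (l.getD (i + 1) a)) with hS
      set T := (Finset.range (k - 1)).filter (fun i => G.Adj b (l.getD i a)) with hT
      have hScard : S.card = G.degree a := by
        rw [← SimpleGraph.card_neighborFinset_eq_degree]
        apply Finset.card_bij (fun i _ => l.getD (i + 1) a)
        · intro i hi
          rw [hS, Finset.mem_filter] at hi
          exact (SimpleGraph.mem_neighborFinset _ _ _).mpr hi.2
        · intro i hi1 j hj1 hij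
          rw [hS, Finset.mem_filter, Finset.mem_range] at hi1 hj1
          have hi2 : i + 1 < l.length := by omega
          have hj2 : j + 1 < l.length := by omega
          rw [List.getD_eq_getElem _ _ hi2, List.getD_eq_getElem _ _ hj2] at hij
          have := (hnodup.getElem_inj_iff).mp hij
          omega
        · intro y hy
          rw [SimpleGraph.mem_neighborFinset] at hy
          have hyl : y ∈ l := mem_of_adj_head G hchain hnodup hmax hne (G.adj_symm hy)
          obtain ⟨m, hm, hml⟩ := List.mem_iff_getElem.mp hyl
          have hm0 : m ≠ 0 := by
            intro h0; subst h0
            apply G.ne_of_adj hy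
            rw [← hml, ha, List.head_eq_getElem]
          have hmm : m - 1 + 1 = m := by omega
          refine ⟨m - 1, ?_, ?_⟩
          · rw [hS, Finset.mem_filter, Finset.mem_range]
            refine ⟨by omega, ?_⟩
            rw [hmm, List.getD_eq_getElem _ _ hm, hml]
            exact hy
          · rw [hmm, List.getD_eq_getElem _ _ hm, hml]
      have hTcard : T.card = G.degree b := by
        rw [← SimpleGraph.card_neighborFinset_eq_degree]
        apply Finset.card_bij (fun i _ => l.getD i a)
        · intro i hi
          rw [hT, Finset.mem_filter] at hi
          exact (SimpleGraph.mem_neighborFinset _ _ _).mpr hi.2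
        · intro i hi1 j hj1 hij
          rw [hT, Finset.mem_filter, Finset.mem_range] at hi1 hj1
          have hi2 : i < l.length := by omega
          have hj2 : j < l.length := by omega
          rw [List.getD_eq_getElem _ _ hi2, List.getD_eq_getElem _ _ hj2] at hij
          exact (hnodup.getElem_inj_iff).mp hij
        · intro y hy
          rw [SimpleGraph.mem_neighborFinset] at hy
          have hyl : y ∈ l := mem_of_adj_getLast G hchain hnodup hmax hne (G.adj_symm hy)
          obtain ⟨m, hm, hml⟩ := List.mem_iff_getElem.mp hyl
          have hmk : m ≠ l.length - 1 := by
            intro h0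
            apply G.ne_of_adj hy
            rw [← hml, hb, List.getLast_eq_getElem]
            subst h0
            rfl
          refine ⟨m, ?_, ?_⟩
          · rw [hT, Finset.mem_filter, Finset.mem_range]
            refine ⟨by omega, ?_⟩
            rw [List.getD_eq_getElem _ _ hm, hml]
            exact hy
          · rw [List.getD_eq_getElem _ _ hm, hml]
      have hUcard : (S ∪ T).card ≤ k - 1 := by
        have hsub : S ∪ T ⊆ Finset.range (k - 1) := by
          rw [hS, hT]
          exact Finset.union_subset (Finset.filter_subset _ _) (Finset.filter_subset _ _)
        simpa using Finset.card_le_card hsub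
      have hint := Finset.card_union_add_card_inter S T
      have hpos : 0 < (S ∩ T).card := by omega
      obtain ⟨i, hi⟩ := Finset.card_pos.mp hpos
      rw [Finset.mem_inter, hS, hT, Finset.mem_filter, Finset.mem_filter,
        Finset.mem_range] at hi
      obtain ⟨⟨hik, hai⟩, _, hbi⟩ := hi
      have hi1 : i + 1 < l.length := by omega
      set c := l.take (i + 1) ++ (l.drop (i + 1)).reverse with hc
      have htne : l.take (i + 1) ≠ [] := by
        apply List.ne_nil_of_length_pos; simp; omega
      have hdne : l.drop (i + 1) ≠ [] := by
        apply List.ne_nil_of_length_pos; simp; omega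
      have hdrne : (l.drop (i + 1)).reverse ≠ [] := by simpa using hdne
      have hperm : c.Perm l := by
        have h1 := List.Perm.append_left (l.take (i + 1)) (List.reverse_perm (l.drop (i + 1)))
        rwa [List.take_append_drop] at h1
      have hgetDi : l.getD i a = l[i]'(by omega) := List.getD_eq_getElem _ _ (by omega)
      have hgetDi1 : l.getD (i + 1) a = l[i + 1]'hi1 := List.getD_eq_getElem _ _ hi1
      have hcchain : c.Chain' G.Adj := by
        refine List.isChain_append.mpr
          ⟨hchain.take _, chain'_reverse_of_symm (fun _ _ h => G.adj_symm h) (hchain.drop _), ?_⟩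
        intro x hx y hy
        rw [List.getLast?_eq_getLast htne, Option.mem_some_iff] at hx
        rw [List.head?_eq_head hdrne, Option.mem_some_iff] at hy
        subst hx; subst hy
        rw [List.head_reverse, List.getLast_drop]
        have h1 : (l.take (i + 1)).getLast htne = l[i]'(by omega) := by
          rw [List.getLast_take]
          simp only [Nat.add_sub_cancel]
          rw [List.getElem?_eq_getElem (by omega : i < l.length)]
          simp
        rw [h1]
        exact G.adj_symm (hgetDi ▸ hbi)
      have hcne2 : c ≠ [] := by
        apply List.ne_nil_of_length_pos
        rw [List.length_append]
        have := List.length_pos_iff.mpr htne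
        omega
      have hlastc : c.getLast hcne2 = l[i + 1]'hi1 := by
        have h4 : ((l.drop (i + 1)).reverse).getLast? = some (l[i + 1]'hi1) := by
          rw [List.getLast?_eq_getLast hdrne, List.getLast_reverse, List.head_drop]
        have h5 : c.getLast? = some (l[i + 1]'hi1) := by
          rw [hc, List.getLast?_append_of_ne_nil _ hdrne, h4]
        have h6 := List.getLast?_eq_getLast hcne2
        rw [h5] at h6
        exact (Option.some_inj.mp h6).symm
      have hheadc : c.head hcne2 = a := by
        have h7 := List.head_append_left (l₂ := (l.drop (i + 1)).reverse) htne
        exact h7.trans (List.head_take htne)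
      refine ⟨c, hcchain, hperm, hcne2, ?_⟩
      rw [hlastc, hheadc]
      exact G.adj_symm (hgetDi1 ▸ hai)
  obtain ⟨c, hcchain, hcperm, hcne, hcadj⟩ := hcyc
  -- rotate the cycle so that a neighbor of v0 is last, then extend by v0
  have hclen : c.length = k := by rw [hcperm.length_eq, hlen]
  obtain ⟨j, hj, hjx⟩ := List.mem_iff_getElem.mp (hcperm.mem_iff.mpr hx0l)
  set c' := c.rotate (j + 1) with hc'
  have hc'chain : c'.Chain' G.Adj := chain'_rotate_of_cycle hcchain hcne hcadj (j + 1) (by omega)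
  have hc'ne : c' ≠ [] := by
    apply List.ne_nil_of_length_pos
    rw [hc', List.length_rotate]; omega
  have hc'last : c'.getLast hc'ne = x0 := by
    have htne : c.take (j + 1) ≠ [] := by
      apply List.ne_nil_of_length_pos; simp; omega
    have heq : c' = c.drop (j + 1) ++ c.take (j + 1) :=
      List.rotate_eq_drop_append_take (by omega : j + 1 ≤ c.length)
    have h1 : (c.take (j + 1)).getLast? = some x0 := by
      rw [List.getLast?_eq_getLast htne, List.getLast_eq_getElem]
      have hmin : min (j + 1) c.length - 1 = j := by omega
      simp only [List.length_take, hmin, List.getElem_take]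
      rw [hjx]
    have h2 : c'.getLast? = some x0 := by
      rw [heq, List.getLast?_append_of_ne_nil _ htne, h1]
    have h3 := List.getLast?_eq_getLast hc'ne
    rw [h2] at h3
    exact (Option.some_inj.mp h3).symm
  -- the extended list contradicts maximality
  have hfin : (c' ++ [v0]).Chain' G.Adj := by
    refine List.isChain_append.mpr ⟨hc'chain, List.isChain_singleton v0, ?_⟩
    intro x hx y hy
    rw [List.getLast?_eq_getLast hc'ne, Option.mem_some_iff] at hx
    simp only [List.head?_cons, Option.mem_some_iff] at hy
    subst hx hy
    rw [hc'last]
    exact G.adj_symm hx0adj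
  have hfnodup : (c' ++ [v0]).Nodup := by
    rw [List.nodup_append]
    refine ⟨List.nodup_rotate.mpr (hcperm.nodup_iff.mpr hnodup), List.nodup_singleton v0, ?_⟩
    intro x hx
    simp only [List.mem_singleton]
    intro _ hb hc
    subst hb hc
    exact hv0 (hcperm.mem_iff.mp (List.mem_rotate.mp hx))
  have := hmax _ hfin hfnodup
  rw [List.length_append, hc', List.length_rotate, hclen, hlen] at this
  simp at this

lemma exists_low_degree_pair (G : SimpleGraph V) [DecidableRel G.Adj]
    (hcard : 1 ≤ Fintype.card V)
    (hno : ¬ ∃ (a b : V) (p : G.Walk a b), p.IsHamiltonian) :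
    ∃ u v : V, u ≠ v ∧ ¬G.Adj u v ∧
      G.degree u + G.degree v + 2 ≤ Fintype.card V := by
  by_contra h
  push_neg at h
  apply hno
  obtain ⟨l, hchain, hnodup, hmem⟩ := ore_hamiltonian_list G hcard
    (fun u v h1 h2 => by have := h u v h1 h2; omega)
  have hlne : l ≠ [] := by
    obtain ⟨v⟩ := Fintype.card_pos_iff.mp hcard
    intro hc; subst hc; simpa using hmem v
  obtain ⟨a, b, p, hp⟩ := exists_walk_of_chain G l hchain hlne
  refine ⟨a, b, p, ?_⟩
  apply SimpleGraph.Walk.IsPath.isHamiltonian_of_mem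
  · exact SimpleGraph.Walk.IsPath.mk' (by rw [hp]; exact hnodup)
  · intro w; rw [hp]; exact hmem w

lemma no_ham_of_isolated (G : SimpleGraph V) (v0 : V) (hiso : ∀ y, ¬G.Adj v0 y)
    (hcard : 2 ≤ Fintype.card V) :
    ¬ ∃ (a b : V) (p : G.Walk a b), p.IsHamiltonian := by
  rintro ⟨a, b, p, hp⟩
  have hmem : v0 ∈ p.support := hp.mem_support v0
  obtain ⟨q, r, hqr⟩ := SimpleGraph.Walk.mem_support_iff_exists_append.mp hmem
  have hlen : p.length = Fintype.card V - 1 := hp.length_eq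
  have hql : q.length + r.length = p.length := by
    rw [hqr, SimpleGraph.Walk.length_append]
  have h1 : 1 ≤ q.length + r.length := by omega
  rcases Nat.lt_or_ge r.length 1 with hr | hr
  · have hqnil : ¬q.reverse.Nil := by
      rw [SimpleGraph.Walk.not_nil_iff_lt_length, SimpleGraph.Walk.length_reverse]
      omega
    exact hiso _ (q.reverse.adj_snd hqnil)
  · have hrnil : ¬r.Nil := by
      rw [SimpleGraph.Walk.not_nil_iff_lt_length]; omega
    exact hiso _ (r.adj_snd hrnil)

lemma edge_bound (G : SimpleGraph V) [DecidableRel G.Adj]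
    (hcard : 2 ≤ Fintype.card V)
    (hno : ¬ ∃ (a b : V) (p : G.Walk a b), p.IsHamiltonian) :
    G.edgeFinset.card ≤ (Fintype.card V - 1).choose 2 := by
  obtain ⟨u, v, huv, hnadj, hdeg⟩ := exists_low_degree_pair G (by omega) hno
  set s := Finset.univ \ {u, v} with hs
  have hscard : s.card = Fintype.card V - 2 := by
    rw [hs, Finset.card_sdiff_of_subset (Finset.subset_univ _), Finset.card_univ,
      Finset.card_pair huv]
  have hsub : G.edgeFinset ⊆
      (KOn s).edgeFinset ∪ G.incidenceFinset u ∪ G.incidenceFinset v := by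
    intro e he
    rw [SimpleGraph.mem_edgeFinset] at he
    revert he
    refine Sym2.ind (fun x y => ?_) e
    intro he
    rw [SimpleGraph.mem_edgeSet] at he
    simp only [Finset.mem_union]
    by_cases hu : x = u ∨ y = u
    · left; right
      rw [SimpleGraph.mem_incidenceFinset]
      exact ⟨(SimpleGraph.mem_edgeSet G).mpr he, Sym2.mem_iff.mpr (by tauto)⟩
    by_cases hv : x = v ∨ y = v
    · right
      rw [SimpleGraph.mem_incidenceFinset]
      exact ⟨(SimpleGraph.mem_edgeSet G).mpr he, Sym2.mem_iff.mpr (by tauto)⟩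
    left; left
    rw [SimpleGraph.mem_edgeFinset, SimpleGraph.mem_edgeSet]
    push_neg at hu hv
    refine ⟨G.ne_of_adj he, ?_, ?_⟩ <;>
      · rw [hs, Finset.mem_sdiff, Finset.mem_insert]
        simp only [Finset.mem_univ, true_and, Finset.mem_singleton]
        tauto
  have hcard_le := Finset.card_le_card hsub
  have h1 := Finset.card_union_le ((KOn s).edgeFinset ∪ G.incidenceFinset u)
    (G.incidenceFinset v)
  have h2 := Finset.card_union_le ((KOn s).edgeFinset) (G.incidenceFinset u)
  rw [SimpleGraph.card_incidenceFinset_eq_degree] at h1 h2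
  rw [KOn_card_edges, hscard] at h2
  have hpascal : (Fintype.card V - 1).choose 2 =
      (Fintype.card V - 2) + (Fintype.card V - 2).choose 2 := by
    have h3 : Fintype.card V - 1 = (Fintype.card V - 2) + 1 := by omega
    rw [h3, Nat.choose_succ_succ, Nat.choose_one_right]
  have h4 : G.degree u + G.degree v ≤ Fintype.card V - 2 := by omega
  rw [hpascal]
  linarith

theorem stmt_9 (n : ℕ) (hn : 2 ≤ n) :
    IsGreatest
      {m : ℕ | ∃ G : SimpleGraph (Fin n),
        (¬ ∃ (a b : Fin n) (p : G.Walk a b), p.IsHamiltonian) ∧ G.edgeSet.ncard = m}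
      (Nat.choose (n - 1) 2) := by
  have hcard : Fintype.card (Fin n) = n := Fintype.card_fin n
  constructor
  · refine ⟨KOn (Finset.univ.erase (⟨0, by omega⟩ : Fin n)), ?_, ?_⟩
    · apply no_ham_of_isolated _ (⟨0, by omega⟩ : Fin n)
      · intro y h
        exact absurd h.2.1 (by simp)
      · omega
    · rw [← SimpleGraph.coe_edgeFinset, Set.ncard_coe_finset, KOn_card_edges,
        Finset.card_erase_of_mem (Finset.mem_univ _), Finset.card_univ, hcard]
  · rintro m ⟨G, hno, hcount⟩
    haveI : DecidableRel G.Adj := Classical.decRel _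
    have h1 : m = G.edgeFinset.card := by
      rw [← hcount, ← SimpleGraph.coe_edgeFinset, Set.ncard_coe_finset]
    rw [h1]
    have := edge_bound G (by omega) hno
    rwa [hcard] at this
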